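/- For every ε ∈ (0, π) there exists a constant c > 0, depending only on ε, such that Re √(λ + s²) ≥ c (s + √|λ|) for all λ ∈ Σ_ε and all real s ≥ 0. -/

import Mathlib

open MeasureTheory Real

/-- Principal complex square root `√z = z^(1/2)` (principal branch of `cpow`). -/
noncomputable def csqrt (z : ℂ) : ℂ := z ^ (1/2 : ℂ)

/-- The sector `Σ_ε = {λ ∈ ℂ : λ ≠ 0, |Arg λ| < π − ε}`. -/
def SigmaSector (ε : ℝ) : Set ℂ := {l : ℂ | l ≠ 0 ∧ |l.arg| < Real.pi - ε}

/-- Mikhlin condition (M) with constant `cbar`, with `K = ⌊(d+1)/2⌋`. -/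
def CondM (d : ℕ) (m : EuclideanSpace ℝ (Fin (d-1)) → ℂ) (cbar : ℝ) : Prop :=
  ContDiffOn ℝ ((d+1)/2 : ℕ) m {ξ : EuclideanSpace ℝ (Fin (d-1)) | ξ ≠ 0} ∧
  ∀ k : ℕ, k ≤ (d+1)/2 → ∀ ξ : EuclideanSpace ℝ (Fin (d-1)), ξ ≠ 0 →
    ‖ξ‖ ^ k * ‖iteratedFDerivWithin ℝ k m
        {ξ : EuclideanSpace ℝ (Fin (d-1)) | ξ ≠ 0} ξ‖ ≤ cbar

/-- Parameterized Mikhlin condition (M*) with constants `(cbar, δ)`, `K = ⌊(d+1)/2⌋`. -/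
def CondMStar (d : ℕ) (m : EuclideanSpace ℝ (Fin (d-1)) → ℝ → ℂ) (cbar δ : ℝ) : Prop :=
  (∀ y : ℝ, 0 ≤ y →
    ContDiffOn ℝ ((d+1)/2 : ℕ) (fun ξ => m ξ y)
      {ξ : EuclideanSpace ℝ (Fin (d-1)) | ξ ≠ 0}) ∧
  ∀ k : ℕ, k ≤ (d+1)/2 →
    ∀ ξ : EuclideanSpace ℝ (Fin (d-1)), ξ ≠ 0 → ∀ y : ℝ, 0 ≤ y →
      ‖ξ‖ ^ k * ‖iteratedFDerivWithin ℝ k (fun ξ => m ξ y)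
          {ξ : EuclideanSpace ℝ (Fin (d-1)) | ξ ≠ 0} ξ‖ ≤
        cbar * Real.exp (-δ * ‖ξ‖ * y) / (1 + y)

/-- The fundamental multiplier `m₀(s, y)`. -/
noncomputable def m0 (l : ℂ) (α : ℝ) (s y : ℝ) : ℂ :=
  ((csqrt (l + (s:ℂ)^2) + s) / ((α:ℂ) + l + csqrt (l + (s:ℂ)^2) + s)) *
    ((Complex.exp (-(y:ℂ) * csqrt (l + (s:ℂ)^2)) - Complex.exp (-(y:ℂ) * s)) / l)

/-- `E(s, y) = e^{-ys} - e^{-y√(λ+s²)}`. -/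
noncomputable def Efun (l : ℂ) (s y : ℝ) : ℂ :=
  Complex.exp (-(y:ℂ) * s) - Complex.exp (-(y:ℂ) * csqrt (l + (s:ℂ)^2))


set_option maxHeartbeats 1000000 in
lemma key_ineq (ε : ℝ) (hε0 : 0 < ε) (hεπ : ε < Real.pi) (l : ℂ) (hl : l ≠ 0)
    (harg : |l.arg| < Real.pi - ε) (s : ℝ) (hs : 0 ≤ s) :
    min (1/4) (Real.sin ε ^ 2 / 18) * (‖l‖ + s^2) ≤
      ‖l + (s:ℂ)^2‖ + (l + (s:ℂ)^2).re := by
  set r := ‖l‖ with hrdef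
  set A := ‖l + (s:ℂ)^2‖ with hAdef
  set M := min (1/4 : ℝ) (Real.sin ε ^ 2 / 18) with hMdef
  have hr : 0 < r := by simpa [hrdef] using (norm_pos_iff.mpr hl)
  have hzre : (l + (s:ℂ)^2).re = l.re + s^2 := by
    simp [Complex.add_re, pow_two, Complex.mul_re]
  have hzim : (l + (s:ℂ)^2).im = l.im := by
    simp [Complex.add_im, pow_two, Complex.mul_im]
  have hA0 : 0 ≤ A := norm_nonneg _
  have habs2 : A^2 = (l.re + s^2)^2 + l.im^2 := by
    rw [hAdef, Complex.sq_norm, Complex.normSq_apply, hzre, hzim]; ring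
  have hr2 : r^2 = l.re^2 + l.im^2 := by
    rw [hrdef, Complex.sq_norm, Complex.normSq_apply]; ring
  have hrel : |l.re| ≤ r := Complex.abs_re_le_norm l
  have hReA : (l + (s:ℂ)^2).re ≤ A := Complex.re_le_norm _
  have hReA' : |(l + (s:ℂ)^2).re| ≤ A := Complex.abs_re_le_norm _
  have hM1 : M ≤ 1/4 := min_le_left _ _
  have hM2 : M ≤ Real.sin ε ^ 2 / 18 := min_le_right _ _
  have hσ : 0 < Real.sin ε := Real.sin_pos_of_pos_of_lt_pi hε0 hεπ
  have hM0 : 0 < M := lt_min (by norm_num) (by positivity)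
  clear_value r A M
  rw [hzre]
  rcases le_or_gt 0 l.re with hlre | hlre
  · -- Re l ≥ 0
    have hAr : r ≤ A := by nlinarith
    have hAs : s^2 ≤ A := by nlinarith
    nlinarith [mul_le_mul_of_nonneg_right hM1 (by positivity : (0:ℝ) ≤ r + s^2)]
  · -- Re l < 0
    have hcos : Real.cos l.arg < 0 := by
      rw [Complex.cos_arg hl]
      exact div_neg_of_neg_of_pos hlre (hrdef ▸ hr)
    have hargb : Real.pi / 2 < |l.arg| := by
      by_contra h
      push_neg at h
      have : 0 ≤ Real.cos l.arg := Real.cos_nonneg_of_mem_Icc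
        ⟨neg_le_of_abs_le h, le_of_abs_le h⟩
      linarith
    have hεhalf : ε < Real.pi / 2 := by linarith
    -- |Im l| ≥ sin ε * r
    have hsinmono : Real.sin ε ≤ Real.sin (Real.pi - |l.arg|) := by
      apply (Real.strictMonoOn_sin.monotoneOn)
        ⟨by linarith, by linarith⟩ ⟨by linarith, by linarith⟩ (by linarith)
    have hsinabs : Real.sin (Real.pi - |l.arg|) ≤ |Real.sin l.arg| := by
      rw [Real.sin_pi_sub]
      rcases abs_cases l.arg with ⟨h1, _⟩ | ⟨h1, _⟩
      · rw [h1]; exact le_abs_self _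
      · rw [h1, Real.sin_neg]; exact neg_le_abs _
    have himl : l.im = Real.sin l.arg * r := by
      rw [hrdef, Complex.sin_arg l, div_mul_cancel₀]
      exact (norm_pos_iff.mpr hl).ne'
    have hIm : Real.sin ε * r ≤ |l.im| := by
      rw [himl, abs_mul, abs_of_pos hr]
      exact mul_le_mul_of_nonneg_right (hsinmono.trans hsinabs) hr.le
    have hIm2 : Real.sin ε ^ 2 * r ^ 2 ≤ l.im ^ 2 := by
      have h1 : (Real.sin ε * r) * (Real.sin ε * r) ≤ |l.im| * |l.im| :=
        mul_self_le_mul_self (by positivity) hIm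
      calc Real.sin ε ^ 2 * r ^ 2 = (Real.sin ε * r) * (Real.sin ε * r) := by ring
      _ ≤ |l.im| * |l.im| := h1
      _ = l.im ^ 2 := by rw [abs_mul_abs_self]; ring
    have hAle : A ≤ r + s^2 := by
      rw [hAdef, hrdef]
      calc ‖l + (s:ℂ)^2‖ ≤ ‖l‖ + ‖(s:ℂ)^2‖ :=
        norm_add_le _ _
      _ = ‖l‖ + s^2 := by rw [norm_pow, Complex.norm_real, Real.norm_eq_abs, abs_of_nonneg hs]
    have hARnn : 0 ≤ A + (l.re + s^2) := by
      have := neg_abs_le (l + (s:ℂ)^2).re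
      rw [hzre] at this hReA'
      linarith [abs_nonneg (l.re + s^2)]
    rcases le_or_gt (s^2) (2*r) with hcase | hcase
    · have h6 : A - (l.re + s^2) ≤ 6 * r := by
        have : -(l.re + s^2) ≤ A := by
          rw [hzre] at hReA'; linarith [neg_abs_le (l.re + s^2)]
        linarith
      have hprod : (A + (l.re + s^2)) * (A - (l.re + s^2)) = l.im^2 := by
        linear_combination habs2
      have h7 : Real.sin ε ^ 2 * r ^ 2 ≤ 6 * r * (A + (l.re + s^2)) := by
        nlinarith [mul_le_mul_of_nonneg_left h6 hARnn]
      nlinarith [h7, mul_le_mul_of_nonneg_right hM2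
          (by positivity : (0:ℝ) ≤ r + s^2),
        mul_le_mul_of_nonneg_left hcase (sq_nonneg (Real.sin ε)), hr]
    · nlinarith [mul_le_mul_of_nonneg_right hM1 (by positivity : (0:ℝ) ≤ r + s^2),
        neg_abs_le l.re]

lemma csqrt_mul_self {z : ℂ} (hz : z ≠ 0) : csqrt z * csqrt z = z := by
  unfold csqrt
  rw [← Complex.cpow_add _ _ hz]
  norm_num

lemma csqrt_re_nonneg (z : ℂ) : 0 ≤ (csqrt z).re := by
  rcases eq_or_ne z 0 with rfl | hz
  · simp [csqrt, Complex.zero_cpow (by norm_num : (1/2:ℂ) ≠ 0)]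
  · unfold csqrt
    rw [Complex.cpow_def_of_ne_zero hz, Complex.exp_re]
    apply mul_nonneg (Real.exp_nonneg _)
    have him : ((Complex.log z) * (1/2 : ℂ)).im = z.arg / 2 := by
      simp [Complex.log_im]; ring
    rw [him]
    apply Real.cos_nonneg_of_mem_Icc
    constructor
    · linarith [Complex.neg_pi_lt_arg z, Real.pi_pos]
    · linarith [Complex.arg_le_pi z, Real.pi_pos]

lemma csqrt_re_eq {z : ℂ} (hz : z ≠ 0) :
    (csqrt z).re = Real.sqrt ((‖z‖ + z.re) / 2) := by
  set w := csqrt z with hw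
  have h2 : w * w = z := csqrt_mul_self hz
  have habs : ‖z‖ = w.re ^ 2 + w.im ^ 2 := by
    rw [← h2, norm_mul, ← pow_two, Complex.sq_norm, Complex.normSq_apply]; ring
  have hre : z.re = w.re ^ 2 - w.im ^ 2 := by
    rw [← h2]; simp [Complex.mul_re]; ring
  have : (‖z‖ + z.re) / 2 = w.re ^ 2 := by rw [habs, hre]; ring
  rw [this, Real.sqrt_sq (csqrt_re_nonneg z)]

/-- `Re √(λ + s²) ≥ c (s + √|λ|)` on the sector. -/
theorem stmt_6 (ε : ℝ) (hε : ε ∈ Set.Ioo 0 Real.pi) :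
    ∃ c : ℝ, 0 < c ∧ ∀ l ∈ SigmaSector ε, ∀ s : ℝ, 0 ≤ s →
      c * (s + Real.sqrt ‖l‖) ≤ (csqrt (l + (s:ℂ)^2)).re := by
  obtain ⟨hε0, hεπ⟩ := hε
  have hσ : 0 < Real.sin ε := Real.sin_pos_of_pos_of_lt_pi hε0 hεπ
  set M := min (1/4 : ℝ) (Real.sin ε ^ 2 / 18) with hMdef
  have hM0 : 0 < M := lt_min (by norm_num) (by positivity)
  have hM1 : M ≤ 1/4 := min_le_left _ _
  refine ⟨M/3, by positivity, ?_⟩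
  rintro l ⟨hl0, harg⟩ s hs
  have hkey := key_ineq ε hε0 hεπ l hl0 harg s hs
  have hr : 0 < ‖l‖ := norm_pos_iff.mpr hl0
  have hz : l + (s:ℂ)^2 ≠ 0 := by
    intro h
    rw [h] at hkey
    simp only [norm_zero, Complex.zero_re, add_zero] at hkey
    nlinarith
  rw [csqrt_re_eq hz]
  set r := ‖l‖ with hrdef
  set A := ‖l + (s:ℂ)^2‖ with hAdef
  set R := (l + (s:ℂ)^2).re with hRdef
  clear_value r A R
  have hsr : (s + Real.sqrt r)^2 ≤ 2*(s^2 + r) := by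
    nlinarith [sq_nonneg (s - Real.sqrt r), Real.sq_sqrt hr.le, Real.sqrt_nonneg r]
  have hARnn : 0 ≤ A + R := le_trans (by positivity) hkey
  have h1 : (M/3*(s + Real.sqrt r))^2 ≤ (A + R)/2 := by
    nlinarith [mul_le_mul_of_nonneg_left hsr (by positivity : (0:ℝ) ≤ (M/3)^2),
      mul_le_mul_of_nonneg_left hkey (by positivity : (0:ℝ) ≤ 2*M/9), hARnn, hM1, hM0]
  calc M/3*(s + Real.sqrt r) = Real.sqrt ((M/3*(s + Real.sqrt r))^2) :=
        (Real.sqrt_sq (by positivity)).symm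
  _ ≤ Real.sqrt ((A + R)/2) := Real.sqrt_le_sqrt h1
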